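/- Let f_1,…,f_m ∈ ℝ[x_1,…,x_n] satisfy the regularity hypothesis. Let z ∈ ℝⁿ and let σ ∈ {<,=,>}^m be the sign condition with f_i(z) σ_i 0 for all i. Then every σ̂ ∈ {<,=,>}^m with σ̂_i = σ_i for every i such that σ_i ≠ '=' is feasible, i.e., there exists w ∈ ℝⁿ with f_i(w) σ̂_i 0 for all i = 1,…,m. -/

import Mathlib

open MvPolynomial

/-- A sign symbol among `<, =, >`. -/
inductive Sign3 | lt | eq | gt
deriving DecidableEq

/-- The relation "`t σ 0`" for a sign symbol `σ`. -/
def Sign3.holds : Sign3 → ℝ → Prop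
  | .lt, t => t < 0
  | .eq, t => t = 0
  | .gt, t => 0 < t

/-- The regularity hypothesis: for every `x ∈ ℂⁿ` and every subset `S` of the indices,
if all `f_i`, `i ∈ S`, vanish at `x`, then their gradients at `x` are linearly
independent over `ℂ`. -/
def RegHyp {n m : ℕ} (f : Fin m → MvPolynomial (Fin n) ℝ) : Prop :=
  ∀ (x : Fin n → ℂ) (S : Set (Fin m)),
    (∀ i ∈ S, eval x ((f i).map (algebraMap ℝ ℂ)) = 0) →
    LinearIndependent ℂ
      (fun i : S => fun k : Fin n => eval x (pderiv k ((f i.1).map (algebraMap ℝ ℂ))))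

noncomputable def grad {n : ℕ} (p : MvPolynomial (Fin n) ℝ) (z : Fin n → ℝ) :
    (Fin n → ℝ) →L[ℝ] ℝ :=
  ∑ k, eval z (pderiv k p) • (ContinuousLinearMap.proj k : (Fin n → ℝ) →L[ℝ] ℝ)

lemma grad_apply {n : ℕ} (p : MvPolynomial (Fin n) ℝ) (z v : Fin n → ℝ) :
    grad p z v = ∑ k, eval z (pderiv k p) * v k := by
  simp [grad]

lemma hasStrictFDerivAt_eval {n : ℕ} (p : MvPolynomial (Fin n) ℝ) (z : Fin n → ℝ) :
    HasStrictFDerivAt (fun x : Fin n → ℝ => eval x p) (grad p z) z := by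
  induction p using MvPolynomial.induction_on with
  | C a =>
      have : grad (C a : MvPolynomial (Fin n) ℝ) z = 0 := by
        ext v; simp [grad_apply]
      simpa [this] using hasStrictFDerivAt_const a z
  | add p q hp hq =>
      have : grad (p + q) z = grad p z + grad q z := by
        ext v; simp [grad_apply, Finset.sum_add_distrib, add_mul]
      rw [this]; simp only [map_add]; exact hp.add hq
  | mul_X p k hp =>
      have hk := hasStrictFDerivAt_apply (𝕜 := ℝ) (F' := fun _ : Fin n => ℝ) k z
      have h := hp.mul hk
      have : grad (p * X k) z
          = (eval z p) • (ContinuousLinearMap.proj k : (Fin n → ℝ) →L[ℝ] ℝ)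
            + (z k) • grad p z := by
        ext v
        simp only [grad_apply, ContinuousLinearMap.add_apply, ContinuousLinearMap.smul_apply,
          ContinuousLinearMap.proj_apply, smul_eq_mul, pderiv_mul, pderiv_X]
        simp only [map_add, map_mul, eval_X]
        have hterm : ∀ k' ∈ Finset.univ, ((eval z) ((pderiv k') p) * z k
              + (eval z) p * (eval z) ((Pi.single k' 1 : Fin n → MvPolynomial (Fin n) ℝ) k)) * v k'
            = z k * ((eval z) ((pderiv k') p) * v k')
              + (if k = k' then (eval z) p * v k' else 0) := by
          intro k' _
          rw [Pi.single_apply]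
          by_cases hkk : k = k'
          · subst hkk; simp; ring
          · simp only [if_neg hkk]; simp; ring
        rw [Finset.sum_congr rfl hterm, Finset.sum_add_distrib, ← Finset.mul_sum,
          Finset.sum_ite_eq Finset.univ k (fun k' => (eval z) p * v k')]
        simp [add_comm]
      rw [this]
      have he : (fun x : Fin n → ℝ => eval x (p * X k)) = fun y => (eval y) p * y k := by
        funext y; simp
      rw [he]
      exact h

lemma surj_of_linIndep {n : ℕ} {ι : Type*} [Fintype ι] [DecidableEq ι] {G : ι → Fin n → ℝ}
    (h : LinearIndependent ℝ G) (c : ι → ℝ) :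
    ∃ v : Fin n → ℝ, ∀ i, ∑ k, G i k * v k = c i := by
  set T : (Fin n → ℝ) →ₗ[ℝ] (ι → ℝ) :=
    LinearMap.pi (fun i => ∑ k, G i k • LinearMap.proj k) with hT
  have hTapp : ∀ v i, T v i = ∑ k, G i k * v k := by
    intro v i; simp [hT]
  have hsurj : Function.Surjective T := by
    rw [← LinearMap.range_eq_top]
    by_contra hlt
    obtain ⟨φ, φ0, hker⟩ :=
      (LinearMap.range T).exists_le_ker_of_lt_top (lt_top_iff_ne_top.2 hlt)
    set a : ι → ℝ := fun i => φ (fun j => if i = j then 1 else 0) with ha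
    have hφ : ∀ c : ι → ℝ, φ c = ∑ i, c i * a i := by
      intro c
      conv_lhs => rw [pi_eq_sum_univ c, map_sum]
      simp [ha, smul_eq_mul]
    set u : Fin n → ℝ := ∑ i, a i • G i with hu
    have hdot : ∀ v : Fin n → ℝ, (∑ k, u k * v k) = 0 := by
      intro v
      have h1 : φ (T v) = 0 := hker ⟨v, rfl⟩
      rw [hφ] at h1
      calc ∑ k, u k * v k = ∑ k, (∑ i, a i * G i k) * v k := by
              simp [hu, Finset.sum_apply, smul_eq_mul]
        _ = ∑ k, ∑ i, a i * G i k * v k := by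
              simp [Finset.sum_mul]
        _ = ∑ i, ∑ k, a i * G i k * v k := Finset.sum_comm
        _ = ∑ i, T v i * a i := by
              refine Finset.sum_congr rfl fun i _ => ?_
              rw [hTapp, Finset.sum_mul]
              exact Finset.sum_congr rfl fun k _ => by ring
        _ = 0 := h1
    have hu0 : u = 0 := by
      funext k0
      have h3 : ∀ k ∈ Finset.univ, (0:ℝ) ≤ u k * u k := fun k _ => mul_self_nonneg _
      have h4 := (Finset.sum_eq_zero_iff_of_nonneg h3).1 (hdot u) k0 (Finset.mem_univ _)
      exact mul_self_eq_zero.1 h4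
    have ha0 : ∀ i, a i = 0 :=
      Fintype.linearIndependent_iff.1 h a (by rw [← hu, hu0])
    apply φ0
    apply LinearMap.ext fun c => ?_
    rw [hφ]
    simp [ha0]
  obtain ⟨v, hv⟩ := hsurj c
  exact ⟨v, fun i => by rw [← hTapp, hv]⟩

lemma eval_complexify {n : ℕ} (z : Fin n → ℝ) (p : MvPolynomial (Fin n) ℝ) :
    eval (fun k => (z k : ℂ)) (p.map (algebraMap ℝ ℂ)) = ((eval z p : ℝ) : ℂ) := by
  have h := MvPolynomial.eval₂_comp_left (algebraMap ℝ ℂ) (RingHom.id ℝ) z p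
  simp only [RingHom.comp_id, MvPolynomial.eval₂_id] at h
  rw [eval_map]
  exact h.symm

lemma linIndep_of_complex {n : ℕ} {ι : Type*} {G : ι → Fin n → ℝ}
    (h : LinearIndependent ℂ (fun i => fun k => ((G i k : ℝ) : ℂ))) :
    LinearIndependent ℝ G := by
  have hinj : Function.Injective fun r : ℝ => r • (1 : ℂ) := by
    intro a b hab
    simpa [Complex.real_smul] using hab
  have h1 : LinearIndependent ℝ (fun i => fun k => ((G i k : ℝ) : ℂ)) :=
    h.restrict_scalars hinj
  let L : (Fin n → ℝ) →ₗ[ℝ] (Fin n → ℂ) :=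
    LinearMap.pi (fun k => Complex.ofRealAm.toLinearMap.comp (LinearMap.proj k))
  exact LinearIndependent.of_comp L h1

lemma eventually_pos_of_deriv_pos {g : ℝ → ℝ} {d : ℝ} (hg : HasDerivAt g d 0)
    (h0 : g 0 = 0) (hd : 0 < d) : ∀ᶠ t in nhdsWithin 0 (Set.Ioi 0), 0 < g t := by
  have ht := hg.tendsto_slope_zero_right
  have h2 : ∀ᶠ t in nhdsWithin (0:ℝ) (Set.Ioi 0), 0 < t⁻¹ • (g (0 + t) - g 0) :=
    ht.eventually (eventually_gt_nhds hd)
  have h3 : ∀ᶠ t in nhdsWithin (0:ℝ) (Set.Ioi 0), 0 < t :=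
    eventually_mem_nhdsWithin
  filter_upwards [h2, h3] with t hpos htpos
  rw [zero_add, h0, sub_zero, smul_eq_mul] at hpos
  have h4 : 0 < t * (t⁻¹ * g t) := mul_pos htpos hpos
  rwa [← mul_assoc, mul_inv_cancel₀ (ne_of_gt htpos), one_mul] at h4

lemma eventually_neg_of_deriv_neg {g : ℝ → ℝ} {d : ℝ} (hg : HasDerivAt g d 0)
    (h0 : g 0 = 0) (hd : d < 0) : ∀ᶠ t in nhdsWithin 0 (Set.Ioi 0), g t < 0 := by
  have := eventually_pos_of_deriv_pos (hg.neg) (by simp [h0]) (by simpa using hd)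
  filter_upwards [this] with t ht
  simpa using ht

theorem statement6 (n m : ℕ) (f : Fin m → MvPolynomial (Fin n) ℝ) (hreg : RegHyp f)
    (z : Fin n → ℝ) (σ : Fin m → Sign3) (hσ : ∀ i, (σ i).holds (eval z (f i)))
    (σ' : Fin m → Sign3) (hσ' : ∀ i, σ i ≠ Sign3.eq → σ' i = σ i) :
    ∃ w : Fin n → ℝ, ∀ i, (σ' i).holds (eval w (f i)) := by
  classical
  set G : Fin m → Fin n → ℝ := fun i k => eval z (pderiv k (f i)) with hG
  have hzeq : ∀ i, σ i = Sign3.eq → eval z (f i) = 0 := by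
    intro i h; have h2 := hσ i; rw [h] at h2; exact h2
  have hKZ : ∀ i, σ' i = Sign3.eq → σ i = Sign3.eq := by
    intro i h; by_contra hcon; rw [hσ' i hcon] at h; exact hcon h
  -- real linear independence of gradients over any subset of the common zero indices
  have hind : ∀ S : Set (Fin m), (∀ i ∈ S, σ i = Sign3.eq) →
      LinearIndependent ℝ (fun i : S => G i.1) := by
    intro S hS
    apply linIndep_of_complex
    have h0 : ∀ i ∈ S, eval (fun k => (z k : ℂ)) ((f i).map (algebraMap ℝ ℂ)) = 0 := by
      intro i hi; rw [eval_complexify, hzeq i (hS i hi)]; norm_num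
    have h1 := hreg (fun k => (z k : ℂ)) S h0
    have he : (fun i : S => fun k : Fin n =>
        eval (fun k => (z k : ℂ)) (pderiv k ((f i.1).map (algebraMap ℝ ℂ))))
        = fun i : S => fun k => ((G i.1 k : ℝ) : ℂ) := by
      funext i k
      rw [MvPolynomial.pderiv_map, eval_complexify]
    rw [he] at h1
    exact h1
  set c : Fin m → ℝ := fun i => match σ' i with
    | Sign3.eq => 0 | Sign3.gt => 1 | Sign3.lt => -1 with hc
  set Z : Set (Fin m) := {i | σ i = Sign3.eq} with hZ
  obtain ⟨w0, hw0⟩ := surj_of_linIndep (hind Z (fun i hi => hi)) (fun i => c i.1)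
  set K : Set (Fin m) := {i | σ' i = Sign3.eq} with hK
  have hindK := hind K (fun i hi => hKZ i hi)
  set F : (Fin n → ℝ) → (K → ℝ) := fun x i => eval x (f i.1) with hF
  set Df : (Fin n → ℝ) →L[ℝ] (K → ℝ) :=
    ContinuousLinearMap.pi (fun i : K => grad (f i.1) z) with hDf
  have hFd : HasStrictFDerivAt F Df z := by
    apply hasStrictFDerivAt_pi''
    intro i
    rw [hDf, ContinuousLinearMap.proj_pi]
    exact hasStrictFDerivAt_eval (f i.1) z
  have hsurjDf : LinearMap.range (Df : (Fin n → ℝ) →ₗ[ℝ] (K → ℝ)) = ⊤ := by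
    rw [LinearMap.range_eq_top]
    intro y
    obtain ⟨v, hv⟩ := surj_of_linIndep hindK y
    refine ⟨v, funext fun i => ?_⟩
    rw [hDf]
    simpa [grad_apply] using hv i
  set v : LinearMap.ker (Df : (Fin n → ℝ) →ₗ[ℝ] (K → ℝ)) := ⟨w0, by
    rw [LinearMap.mem_ker]
    have : Df w0 = fun i : K => ∑ k, G i.1 k * w0 k := by
      funext i; rw [hDf]; simp [grad_apply]; rfl
    rw [ContinuousLinearMap.coe_coe, this]
    funext i
    have h5 := hw0 ⟨i.1, hKZ i.1 i.2⟩
    rw [h5]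
    have h6 : σ' i.1 = Sign3.eq := i.2
    simp [hc, h6]⟩ with hv
  set φ := hFd.implicitFunction F Df hsurjDf with hφ
  set γ : ℝ → (Fin n → ℝ) := fun t => φ (F z) (t • v) with hγdef
  have hγ0 : γ 0 = z := by
    rw [hγdef]
    simp only [zero_smul]
    exact hFd.implicitFunction_apply_image hsurjDf
  have hφd : HasStrictFDerivAt (φ (F z)) (LinearMap.ker (Df : (Fin n → ℝ) →ₗ[ℝ] (K → ℝ))).subtypeL 0 :=
    hFd.to_implicitFunction hsurjDf
  have hsmul : HasDerivAt (fun t : ℝ => t • v) v 0 := by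
    simpa using (hasDerivAt_id (0:ℝ)).smul_const v
  have hγd : HasDerivAt γ w0 0 := by
    have hφd' : HasFDerivAt (φ (F z)) (LinearMap.ker (Df : (Fin n → ℝ) →ₗ[ℝ] (K → ℝ))).subtypeL ((fun t : ℝ => t • v) 0) := by
      rw [show (fun t : ℝ => t • v) 0 = 0 from zero_smul _ _]
      exact hφd.hasFDerivAt
    have h7 := hφd'.comp_hasDerivAt 0 hsmul
    have hfun : (φ (F z)) ∘ (fun t : ℝ => t • v) = γ := rfl
    rw [hfun] at h7
    exact h7
  have hgd : ∀ i, HasDerivAt (fun t => eval (γ t) (f i)) (∑ k, G i k * w0 k) 0 := by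
    intro i
    have he := (hasStrictFDerivAt_eval (f i) z).hasFDerivAt
    rw [← hγ0] at he
    have h8 := he.comp_hasDerivAt (x := 0) hγd
    have hfun : (fun x => eval x (f i)) ∘ γ = fun t => eval (γ t) (f i) := rfl
    rw [hfun] at h8
    simp only [grad_apply, hγ0] at h8
    exact h8
  have hmain : ∀ i, ∀ᶠ t in nhdsWithin (0:ℝ) (Set.Ioi 0),
      (σ' i).holds (eval (γ t) (f i)) := by
    intro i
    by_cases hieq : σ i = Sign3.eq
    · have hdot : ∑ k, G i k * w0 k = c i := hw0 ⟨i, hieq⟩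
      have hg0 : eval (γ 0) (f i) = 0 := by rw [hγ0]; exact hzeq i hieq
      rcases hσi' : σ' i with _ | _ | _
      · -- σ' i = lt
        have hd : (∑ k, G i k * w0 k) < 0 := by rw [hdot]; simp [hc, hσi']
        have := eventually_neg_of_deriv_neg (hgd i) hg0 hd
        filter_upwards [this] with t ht
        rw [Sign3.holds]
        exact ht
      · -- σ' i = eq
        have hmap := hFd.map_implicitFunction_eq hsurjDf
        have htend : Filter.Tendsto (fun t : ℝ => (F z, t • v)) (nhds 0)
            (nhds (F z, (0 : LinearMap.ker (Df : (Fin n → ℝ) →ₗ[ℝ] (K → ℝ))))) := by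
          refine Filter.Tendsto.prodMk_nhds tendsto_const_nhds ?_
          have h9 : Filter.Tendsto (fun t : ℝ => t • v) (nhds 0) (nhds ((0:ℝ) • v)) :=
            ((continuous_id.smul continuous_const).tendsto 0)
          rwa [zero_smul] at h9
        have hev := htend.eventually hmap
        refine Filter.Eventually.filter_mono nhdsWithin_le_nhds ?_
        filter_upwards [hev] with t ht
        have h10 := congrFun ht ⟨i, hσi'⟩
    -- h10 : F (γ t) ⟨i,_⟩ = F z ⟨i,_⟩
        rw [Sign3.holds]
        have h11 : F z ⟨i, hσi'⟩ = 0 := hzeq i hieq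
        rw [← h11]
        exact h10
      · -- σ' i = gt
        have hd : 0 < (∑ k, G i k * w0 k) := by rw [hdot]; simp [hc, hσi']
        have := eventually_pos_of_deriv_pos (hgd i) hg0 hd
        filter_upwards [this] with t ht
        rw [Sign3.holds]
        exact ht
    · have hsame : σ' i = σ i := hσ' i hieq
      have hcont : ContinuousAt (fun t => eval (γ t) (f i)) 0 := (hgd i).continuousAt
      refine Filter.Eventually.filter_mono nhdsWithin_le_nhds ?_
      rw [hsame]
      rcases hσi : σ i with _ | _ | _
      · have h0 : eval (γ 0) (f i) < 0 := by
          rw [hγ0]; have := hσ i; rw [hσi] at this; exact this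
        have hev : ∀ᶠ t in nhds (0:ℝ), eval (γ t) (f i) < 0 :=
          hcont (Iio_mem_nhds h0)
        filter_upwards [hev] with t ht
        rw [Sign3.holds]; exact ht
      · exact absurd hσi hieq
      · have h0 : 0 < eval (γ 0) (f i) := by
          rw [hγ0]; have := hσ i; rw [hσi] at this; exact this
        have hev : ∀ᶠ t in nhds (0:ℝ), 0 < eval (γ t) (f i) :=
          hcont (Ioi_mem_nhds h0)
        filter_upwards [hev] with t ht
        rw [Sign3.holds]; exact ht
  have hall : ∀ᶠ t in nhdsWithin (0:ℝ) (Set.Ioi 0),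
      ∀ i, (σ' i).holds (eval (γ t) (f i)) := Filter.eventually_all.2 hmain
  obtain ⟨t, ht⟩ := hall.exists
  exact ⟨γ t, ht⟩
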